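/- Let G be a group, G₀ a normal subgroup, A a right G-module, and F: G₀ → A a map satisfying F(f⁻¹gf) = F(g)·f for all g ∈ G₀, f ∈ G, and F(gh) = F(g) + F(h) for g,h ∈ G₀. Let H ≤ G be a subgroup with H·G₀ = G and H ∩ G₀ = ker F, and let σ: G/G₀ → H be a set-theoretic section of the projection p: G → G/G₀ with image in H. Then F^σ(g) := F(σ(p(g))⁻¹ g) defines a crossed homomorphism G → A extending F, and ker F^σ = H. -/
import Mathlib


/-- Let `G` be a group, `G₀` a normal subgroup, `A` a right `G`-module and
`F : G₀ → A` additive and `G`-equivariant (`F(f⁻¹gf) = F(g)·f`). Let `H ≤ G` satisfy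
`H·G₀ = G` and `H ∩ G₀ = ker F`, and let `σ : G/G₀ → H` be a set-theoretic section of the
projection `p : G → G/G₀` with image in `H`. Then `F^σ(g) := F(σ(p(g))⁻¹ g)` is a crossed
homomorphism `G → A` extending `F`, with kernel exactly `H`. -/
theorem Fsigma_crossed_hom_extends_and_kernel
    {G A : Type*} [Group G] [AddCommGroup A]
    (G₀ : Subgroup G) [G₀.Normal]
    (act : A → G → A)
    (hact_one : ∀ a, act a 1 = a)
    (hact_mul : ∀ a g h, act a (g * h) = act (act a g) h)
    (hact_add : ∀ a b g, act (a + b) g = act a g + act b g)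
    (F : G → A)
    (hF_conj : ∀ g ∈ G₀, ∀ f : G, F (f⁻¹ * g * f) = act (F g) f)
    (hF_add : ∀ g ∈ G₀, ∀ h ∈ G₀, F (g * h) = F g + F h)
    (H : Subgroup G)
    (hHG₀ : ∀ g : G, ∃ h ∈ H, ∃ k ∈ G₀, g = h * k)
    (hker : ∀ g ∈ G₀, (g ∈ H ↔ F g = 0))
    (σ : G ⧸ G₀ → G)
    (hσH : ∀ x, σ x ∈ H)
    (hσ : ∀ x, QuotientGroup.mk (σ x) = x) :
    -- F^σ is a crossed homomorphism: F^σ(fg) = F^σ(g) + F^σ(f)·g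
    (∀ f g : G,
      F ((σ (QuotientGroup.mk (f * g)))⁻¹ * (f * g)) =
        F ((σ (QuotientGroup.mk g))⁻¹ * g) +
          act (F ((σ (QuotientGroup.mk f))⁻¹ * f)) g) ∧
    -- F^σ extends F
    (∀ g ∈ G₀, F ((σ (QuotientGroup.mk g))⁻¹ * g) = F g) ∧
    -- ker F^σ = H
    (∀ g : G, F ((σ (QuotientGroup.mk g))⁻¹ * g) = 0 ↔ g ∈ H) := by
  have mem : ∀ g : G, (σ (QuotientGroup.mk g))⁻¹ * g ∈ G₀ := fun g =>
    QuotientGroup.eq.mp (hσ (QuotientGroup.mk g))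
  have hF1 : F 1 = 0 := by
    have h := hF_add 1 G₀.one_mem 1 G₀.one_mem
    rw [one_mul] at h
    exact left_eq_add.mp h
  refine ⟨?_, ?_, ?_⟩
  · intro f g
    set sf := σ (QuotientGroup.mk f) with hsfdef
    set sg := σ (QuotientGroup.mk g) with hsgdef
    set sfg := σ (QuotientGroup.mk (f * g)) with hsfgdef
    have hu : sf⁻¹ * f ∈ G₀ := mem f
    have hv : sg⁻¹ * g ∈ G₀ := mem g
    have hmk : (QuotientGroup.mk (sf * sg) : G ⧸ G₀) = QuotientGroup.mk (f * g) := by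
      rw [QuotientGroup.mk_mul, hσ, hσ, ← QuotientGroup.mk_mul]
    have ht0 : sfg⁻¹ * (sf * sg) ∈ G₀ :=
      QuotientGroup.eq.mp ((hσ _).trans hmk.symm)
    have htH : sfg⁻¹ * (sf * sg) ∈ H :=
      H.mul_mem (H.inv_mem (hσH _)) (H.mul_mem (hσH _) (hσH _))
    have hFt : F (sfg⁻¹ * (sf * sg)) = 0 := (hker _ ht0).mp htH
    have hconj : g⁻¹ * (sf⁻¹ * f) * g ∈ G₀ := by
      have := (inferInstance : G₀.Normal).conj_mem _ hu g⁻¹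
      simpa using this
    have hw : sfg⁻¹ * (f * g) =
        (sfg⁻¹ * (sf * sg)) * ((sg⁻¹ * g) * (g⁻¹ * (sf⁻¹ * f) * g)) := by
      group
    rw [hw, hF_add _ ht0 _ (G₀.mul_mem hv hconj), hF_add _ hv _ hconj, hFt, zero_add,
      hF_conj _ hu g]
  · intro g hg
    have hs0 : σ (QuotientGroup.mk g) ∈ G₀ := by
      rw [← QuotientGroup.eq_one_iff, hσ, QuotientGroup.eq_one_iff]
      exact hg
    have hFs : F (σ (QuotientGroup.mk g))⁻¹ = 0 :=
      (hker _ (G₀.inv_mem hs0)).mp (H.inv_mem (hσH _))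
    rw [hF_add _ (G₀.inv_mem hs0) _ hg, hFs, zero_add]
  · intro g
    have hk : (σ (QuotientGroup.mk g))⁻¹ * g ∈ G₀ := mem g
    constructor
    · intro h0
      have hH : (σ (QuotientGroup.mk g))⁻¹ * g ∈ H := (hker _ hk).mpr h0
      have := H.mul_mem (hσH (QuotientGroup.mk g)) hH
      simpa using this
    · intro hgH
      exact (hker _ hk).mp (H.mul_mem (H.inv_mem (hσH _)) hgH)
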